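/- Every nonempty even subgraph of a locally finite infinite graph contains either a finite simple cycle or a bi-infinite simple path. -/

import Mathlib

open SimpleGraph

/-- A walk along a sequence of vertices. -/
private def walkTo {V : Type*} {H' : SimpleGraph V} (h : ℕ → V)
    (hadj : ∀ k, H'.Adj (h k) (h (k+1))) (a : ℕ) : (b : ℕ) → H'.Walk (h a) (h (a + b))
  | 0 => SimpleGraph.Walk.nil
  | b + 1 => (walkTo h hadj a b).concat (hadj (a + b))

private lemma support_walkTo {V : Type*} {H' : SimpleGraph V} (h : ℕ → V)
    (hadj : ∀ k, H'.Adj (h k) (h (k+1))) (a : ℕ) (b : ℕ) :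
    (walkTo h hadj a b).support = (List.range (b+1)).map (fun k => h (a + k)) := by
  induction b with
  | zero => simp [walkTo, List.range_succ]
  | succ b ih =>
      simp [walkTo, SimpleGraph.Walk.support_concat, ih, List.range_succ, Nat.add_assoc]

private lemma edges_walkTo {V : Type*} {H' : SimpleGraph V} (h : ℕ → V)
    (hadj : ∀ k, H'.Adj (h k) (h (k+1))) (a : ℕ) (b : ℕ) :
    (walkTo h hadj a b).edges = (List.range b).map (fun k => s(h (a + k), h (a + k + 1))) := by
  induction b with
  | zero => simp [walkTo]
  | succ b ih =>
      simp [walkTo, SimpleGraph.Walk.edges_concat, ih, List.range_succ, Nat.add_assoc]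

private lemma length_walkTo {V : Type*} {H' : SimpleGraph V} (h : ℕ → V)
    (hadj : ∀ k, H'.Adj (h k) (h (k+1))) (a : ℕ) (b : ℕ) :
    (walkTo h hadj a b).length = b := by
  induction b with
  | zero => simp [walkTo]
  | succ b ih => simp [walkTo, SimpleGraph.Walk.length_concat, ih]

/-- In a graph with no cycles, a non-backtracking one-sided infinite walk is injective. -/
private lemma key_inj {V : Type*} {H' : SimpleGraph V}
    (hac : ∀ (v : V) (c : H'.Walk v v), ¬ c.IsCycle)
    (h : ℕ → V) (hadj : ∀ k, H'.Adj (h k) (h (k+1)))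
    (hnb : ∀ k, h (k+2) ≠ h k) : Function.Injective h := by
  by_contra hinj
  have hex : ∃ d, 0 < d ∧ ∃ a, h a = h (a + d) := by
    simp only [Function.Injective, not_forall] at hinj
    obtain ⟨x, y, hxy, hne⟩ := hinj
    rcases Nat.lt_or_ge x y with hlt | hge
    · exact ⟨y - x, by omega, x, by rw [Nat.add_sub_cancel' hlt.le]; exact hxy⟩
    · have hlt : y < x := lt_of_le_of_ne hge (Ne.symm hne)
      exact ⟨x - y, by omega, y, by rw [Nat.add_sub_cancel' hlt.le]; exact hxy.symm⟩
  classical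
  obtain ⟨hdpos, a, ha⟩ := Nat.find_spec hex
  set d := Nat.find hex with hd
  -- minimality claim
  have claim : ∀ x y : ℕ, x < y → y - x < d → h x ≠ h y := by
    intro x y hxy hyd heq
    exact Nat.find_min hex hyd ⟨by omega, x, by rw [Nat.add_sub_cancel' hxy.le]; exact heq⟩
  have hd1 : d ≠ 1 := by
    intro h1
    rw [h1] at ha
    exact H'.ne_of_adj (hadj a) ha
  have hd2 : d ≠ 2 := by
    intro h2
    rw [h2] at ha
    exact (hnb a) ha.symm
  have hd3 : 3 ≤ d := by omega
  -- build the cycle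
  let c : H'.Walk (h a) (h a) := (walkTo h hadj a d).copy rfl ha.symm
  have hcsup : c.support = (List.range (d+1)).map (fun k => h (a + k)) := by
    simpa [c] using support_walkTo h hadj a d
  have hcedges : c.edges = (List.range d).map (fun k => s(h (a + k), h (a + k + 1))) := by
    simpa [c] using edges_walkTo h hadj a d
  have hclen : c.length = d := by
    simpa [c] using length_walkTo h hadj a d
  refine hac (h a) c ?_
  constructor
  · constructor
    · -- IsTrail: edges nodup
      constructor
      rw [hcedges]
      refine (List.nodup_range (n := d)).map_on ?_
      intro i hi j hj hij
      simp only [List.mem_range] at hi hj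
      by_contra hne
      rcases Nat.lt_or_ge i j with hlt | hge
      · rw [Sym2.eq_iff] at hij
        rcases hij with ⟨h1, _⟩ | ⟨h1, h2⟩
        · exact claim (a + i) (a + j) (by omega) (by omega) h1
        · rcases Nat.lt_or_ge (i + 1) j with hlt2 | hge2
          · exact claim (a + i + 1) (a + j) (by omega) (by omega) h2
          · have hji : j = i + 1 := by omega
            subst hji
            exact (hnb (a + i)) (by rw [show a + i + 2 = a + (i+1) + 1 by omega]; exact h1.symm)
      · have hlt : j < i := by omega
        rw [Sym2.eq_iff] at hij
        rcases hij with ⟨h1, _⟩ | ⟨h1, h2⟩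
        · exact claim (a + j) (a + i) (by omega) (by omega) h1.symm
        · rcases Nat.lt_or_ge (j + 1) i with hlt2 | hge2
          · exact claim (a + j + 1) (a + i) (by omega) (by omega) h1.symm
          · have hji : i = j + 1 := by omega
            subst hji
            exact (hnb (a + j)) (by rw [show a + j + 2 = a + (j+1) + 1 by omega]; exact h2)
    · -- not nil
      intro hnil
      have : c.length = 0 := by rw [hnil]; rfl
      omega
  · -- support tail nodup
    rw [hcsup, List.range_succ_eq_map]
    simp only [List.map_cons, List.tail_cons, List.map_map]
    refine (List.nodup_range (n := d)).map_on ?_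
    intro i hi j hj hij
    simp only [List.mem_range] at hi hj
    simp only [Function.comp, Nat.succ_eq_add_one] at hij
    by_contra hne
    rcases Nat.lt_or_ge i j with hlt | hlt
    · exact claim (a + (i+1)) (a + (j+1)) (by omega) (by omega) hij
    · exact claim (a + (j+1)) (a + (i+1)) (by omega) (by omega) hij.symm

/-- The greedy two-step sequence. -/
private noncomputable def mySeq {V : Type*} (step : V → V → V) (a b : V) : ℕ → V
  | 0 => a
  | 1 => b
  | n+2 => step (mySeq step a b n) (mySeq step a b (n+1))

theorem stmt16 {V : Type*} (G : SimpleGraph V) (hlf : G.LocallyFinite)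
    (H : Set (Sym2 V)) (hHG : H ⊆ G.edgeSet) (hne : H.Nonempty)
    (heven : ∀ v : V, Even {e ∈ H | v ∈ e}.ncard) :
    (∃ (v : V) (c : G.Walk v v), c.IsCycle ∧ ∀ e ∈ c.edges, e ∈ H) ∨
    (∃ f : ℤ → V, Function.Injective f ∧ ∀ n : ℤ, s(f n, f (n + 1)) ∈ H) := by
  classical
  -- the subgraph with edge set H
  let H' : SimpleGraph V :=
    { Adj := fun v w => s(v, w) ∈ H
      symm := ⟨fun v w h => by show s(w, v) ∈ H; rwa [Sym2.eq_swap]⟩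
      loopless := ⟨fun v h => G.loopless.irrefl v (G.mem_edgeSet.mp (hHG h))⟩ }
  have hle : H' ≤ G := fun v w h => G.mem_edgeSet.mp (hHG h)
  have hH'edge : ∀ e ∈ H'.edgeSet, e ∈ H := by
    intro e
    induction e using Sym2.ind with
    | _ x y => intro h; exact (H'.mem_edgeSet.mp h)
  -- every vertex on an edge of H has another neighbor
  have two_nbr : ∀ v w : V, H'.Adj v w → ∃ u, H'.Adj v u ∧ u ≠ w := by
    intro v w hvw
    have hSsub : {e ∈ H | v ∈ e} ⊆ G.incidenceSet v := fun e he => ⟨hHG he.1, he.2⟩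
    have hSfin : {e ∈ H | v ∈ e}.Finite := by
      have : (G.incidenceSet v).Finite := by
        have : Finite (G.neighborSet v) := Set.toFinite _
        have := Finite.of_equiv _ (G.incidenceSetEquivNeighborSet v).symm
        exact Set.toFinite _
      exact this.subset hSsub
    have hmem : s(v, w) ∈ {e ∈ H | v ∈ e} := ⟨hvw, Sym2.mem_mk_left v w⟩
    have h1 : 0 < {e ∈ H | v ∈ e}.ncard := (Set.ncard_pos hSfin).mpr ⟨_, hmem⟩
    have h2 : 1 < {e ∈ H | v ∈ e}.ncard := by
      have := heven v
      rcases this with ⟨k, hk⟩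
      omega
    obtain ⟨e', he', hne'⟩ := Set.exists_ne_of_one_lt_ncard h2 (s(v, w))
    obtain ⟨u, hu⟩ := Sym2.mem_iff_exists.mp he'.2
    refine ⟨u, by show s(v, u) ∈ H; rw [← hu]; exact he'.1, ?_⟩
    intro huw
    exact hne' (by rw [hu, huw])
  -- case split on the existence of a cycle in H'
  by_cases hcyc : ∃ (v : V) (c : H'.Walk v v), c.IsCycle
  · left
    obtain ⟨v, c, hc⟩ := hcyc
    refine ⟨v, c.mapLe hle, hc.mapLe hle, ?_⟩
    intro e he
    have : e ∈ c.edges := by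
      have := he
      rw [SimpleGraph.Walk.edges_map] at this
      simpa using this
    exact hH'edge e (c.edges_subset_edgeSet this)
  · right
    push_neg at hcyc
    -- greedy step function
    let step : V → V → V := fun p cur =>
      if hc : ∃ u, H'.Adj cur u ∧ u ≠ p then Classical.choose hc else cur
    have step_spec : ∀ p cur, H'.Adj p cur →
        H'.Adj cur (step p cur) ∧ step p cur ≠ p := by
      intro p cur hpc
      have hex : ∃ u, H'.Adj cur u ∧ u ≠ p := two_nbr cur p hpc.symm
      have hspec := Classical.choose_spec hex
      simp only [step, dif_pos hex]
      exact hspec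
    obtain ⟨e, heH⟩ := hne
    induction e using Sym2.ind with
    | _ a b =>
    have hab : H'.Adj a b := heH
    -- forward and backward sequences
    set F : ℕ → V := mySeq step a b with hF
    set B : ℕ → V := mySeq step b a with hB
    have seq_adj : ∀ (x y : V), H'.Adj x y → ∀ n, H'.Adj (mySeq step x y n) (mySeq step x y (n+1)) := by
      intro x y hxy n
      induction n with
      | zero => exact hxy
      | succ n ih =>
          have := step_spec _ _ ih
          exact this.1
    have seq_nb : ∀ (x y : V), H'.Adj x y → ∀ n, mySeq step x y (n+2) ≠ mySeq step x y n := by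
      intro x y hxy n
      have := step_spec _ _ (seq_adj x y hxy n)
      exact this.2
    have hFadj : ∀ n, H'.Adj (F n) (F (n+1)) := seq_adj a b hab
    have hBadj : ∀ n, H'.Adj (B n) (B (n+1)) := seq_adj b a hab.symm
    have hFnb : ∀ n, F (n+2) ≠ F n := seq_nb a b hab
    have hBnb : ∀ n, B (n+2) ≠ B n := seq_nb b a hab.symm
    have hF0 : F 0 = a := rfl
    have hF1 : F 1 = b := rfl
    have hB0 : B 0 = b := rfl
    have hB1 : B 1 = a := rfl
    -- the two-sided sequence
    let f : ℤ → V := fun n => if 0 ≤ n then F n.toNat else B (1 - n).toNat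
    have hf_nonneg : ∀ n : ℤ, 0 ≤ n → f n = F n.toNat := by
      intro n hn; simp [f, hn]
    have hf_neg : ∀ n : ℤ, n < 0 → f n = B (1 - n).toNat := by
      intro n hn; simp [f, not_le.mpr hn]
    have hfadj : ∀ n : ℤ, H'.Adj (f n) (f (n+1)) := by
      intro n
      rcases le_or_gt 0 n with hn | hn
      · rw [hf_nonneg n hn, hf_nonneg (n+1) (by omega),
          show (n+1).toNat = n.toNat + 1 by omega]
        exact hFadj n.toNat
      · rcases eq_or_lt_of_le (show n ≤ -1 by omega) with heq | hlt
        · subst heq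
          rw [hf_neg (-1) (by norm_num), hf_nonneg ((-1)+1) (by norm_num)]
          rw [show ((1:ℤ) - (-1)).toNat = 2 by omega, show ((-1:ℤ)+1).toNat = 0 by omega,
            hF0, ← hB1]
          exact (hBadj 1).symm
        · rw [hf_neg n hn, hf_neg (n+1) (by omega),
            show (1 - n).toNat = (1 - (n+1)).toNat + 1 by omega]
          exact (hBadj (1 - (n+1)).toNat).symm
    have hfnb : ∀ n : ℤ, f (n+2) ≠ f n := by
      intro n
      rcases le_or_gt 0 n with hn | hn
      · rw [hf_nonneg n hn, hf_nonneg (n+2) (by omega),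
          show (n+2).toNat = n.toNat + 2 by omega]
        exact hFnb n.toNat
      · rcases eq_or_lt_of_le (show n ≤ -1 by omega) with heq | hlt
        · subst heq
          rw [hf_neg (-1) (by norm_num), hf_nonneg ((-1)+2) (by norm_num)]
          rw [show ((-1:ℤ)+2).toNat = 1 by omega, show ((1:ℤ) - (-1)).toNat = 2 by omega,
            hF1, ← hB0]
          exact fun h => (hBnb 0) h.symm
        · rcases eq_or_lt_of_le (show n ≤ -2 by omega) with heq | hlt2
          · subst heq
            rw [hf_neg (-2) (by norm_num), hf_nonneg ((-2)+2) (by norm_num)]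
            rw [show ((-2:ℤ)+2).toNat = 0 by omega, show ((1:ℤ) - (-2)).toNat = 3 by omega,
              hF0, ← hB1]
            exact fun h => (hBnb 1) h.symm
          · rw [hf_neg n hn, hf_neg (n+2) (by omega),
              show (1 - n).toNat = (1 - (n+2)).toNat + 2 by omega]
            exact fun h => (hBnb (1 - (n+2)).toNat) h.symm
    -- no cycles in H'
    have hac : ∀ (v : V) (c : H'.Walk v v), ¬ c.IsCycle := fun v c hc => hcyc v c hc
    have main : ∀ m n : ℤ, m < n → f m = f n → False := by
      intro m n hlt hmn
      have hadj : ∀ k : ℕ, H'.Adj (f (m + k)) (f (m + (k+1 : ℕ))) := by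
        intro k
        have h2 := hfadj (m + k)
        rwa [show m + (k:ℤ) + 1 = m + ((k+1 : ℕ) : ℤ) by push_cast; ring] at h2
      have hnb : ∀ k : ℕ, f (m + (k+2 : ℕ)) ≠ f (m + k) := by
        intro k
        have h2 := hfnb (m + k)
        rwa [show m + (k:ℤ) + 2 = m + ((k+2 : ℕ) : ℤ) by push_cast; ring] at h2
      have hinj := key_inj hac (fun k : ℕ => f (m + k)) hadj hnb
      have heq : (fun k : ℕ => f (m + k)) (n - m).toNat = (fun k : ℕ => f (m + k)) 0 := by
        simp only []
        rw [show (((n - m).toNat : ℤ)) = n - m by omega, show m + (n - m) = n by ring]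
        rw [show m + ((0:ℕ):ℤ) = m by push_cast; ring]
        exact hmn.symm
      have := hinj heq
      omega
    refine ⟨f, ?_, fun n => hfadj n⟩
    intro m n hmn
    by_contra hne'
    rcases lt_or_gt_of_ne hne' with hlt | hlt
    · exact main m n hlt hmn
    · exact main n m hlt hmn.symm
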